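/- Let G be a graph whose vertex set is partitioned into ℓ cliques C_1, …, C_ℓ, and let G' be obtained from G by adding new vertices v_1, …, v_ℓ with N(v_i) = C_i. Then G has an independent set of size ℓ if and only if G' has an induced matching of size ℓ. Moreover, IS(G') = ℓ. -/

import Mathlib

variable {V : Type*}

/-- `M` is a matching in `G`: a finite set of edges of `G` that are pairwise non-incident. -/
def IsMatchingSet (G : SimpleGraph V) (M : Finset (Sym2 V)) : Prop :=
  (∀ e ∈ M, e ∈ G.edgeSet) ∧
  ∀ e ∈ M, ∀ f ∈ M, e ≠ f → ∀ v : V, v ∈ e → v ∉ f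

/-- `M` is an induced matching in `G`: a matching such that no edge of `G`
joins two distinct edges of `M`. -/
def IsInducedMatchingSet (G : SimpleGraph V) (M : Finset (Sym2 V)) : Prop :=
  IsMatchingSet G M ∧
  ∀ e ∈ M, ∀ f ∈ M, e ≠ f → ∀ a ∈ e, ∀ b ∈ f, ¬ G.Adj a b

/-- `S` is an independent set in `G`. -/
def IsIndepFinset (G : SimpleGraph V) (S : Finset V) : Prop :=
  ∀ a ∈ S, ∀ b ∈ S, ¬ G.Adj a b

/-- Maximum matching size `MM(G)`. -/
noncomputable def MMn (G : SimpleGraph V) : ℕ :=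
  sSup {n | ∃ M : Finset (Sym2 V), IsMatchingSet G M ∧ M.card = n}

/-- Maximum induced matching size `IM(G)`. -/
noncomputable def IMn (G : SimpleGraph V) : ℕ :=
  sSup {n | ∃ M : Finset (Sym2 V), IsInducedMatchingSet G M ∧ M.card = n}

/-- Maximum independent set size `IS(G)`. -/
noncomputable def ISn (G : SimpleGraph V) : ℕ :=
  sSup {n | ∃ S : Finset V, IsIndepFinset G S ∧ S.card = n}

/-- Base adjacency for the reduction from Multicolored Independent Set:
to `G` we add a new vertex for each clique `C i`, adjacent exactly to `C i`. -/
def MISAdj (G : SimpleGraph V) (ℓ : ℕ) (C : Fin ℓ → Finset V) :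
    (V ⊕ Fin ℓ) → (V ⊕ Fin ℓ) → Prop
  | Sum.inl a, Sum.inl b => G.Adj a b
  | Sum.inr i, Sum.inl a => a ∈ C i
  | _, _ => False

def MISGraph (G : SimpleGraph V) (ℓ : ℕ) (C : Fin ℓ → Finset V) :
    SimpleGraph (V ⊕ Fin ℓ) :=
  SimpleGraph.fromRel (MISAdj G ℓ C)


section Aux
open Sum

variable {V : Type*} {G : SimpleGraph V} {ℓ : ℕ} {C : Fin ℓ → Finset V}

lemma adj_inl_inl {a b : V} : (MISGraph G ℓ C).Adj (inl a) (inl b) ↔ G.Adj a b := by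
  simp only [MISGraph, SimpleGraph.fromRel_adj, MISAdj]
  constructor
  · rintro ⟨h, h1 | h1⟩
    · exact h1
    · exact h1.symm
  · intro h
    exact ⟨by simp [h.ne], Or.inl h⟩

lemma adj_inl_inr {a : V} {i : Fin ℓ} :
    (MISGraph G ℓ C).Adj (inl a) (inr i) ↔ a ∈ C i := by
  simp [MISGraph, SimpleGraph.fromRel_adj, MISAdj]

lemma not_adj_inr_inr {i j : Fin ℓ} : ¬ (MISGraph G ℓ C).Adj (inr i) (inr j) := by
  simp [MISGraph, SimpleGraph.fromRel_adj, MISAdj]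

lemma exists_inl_mem {e : Sym2 (V ⊕ Fin ℓ)} (he : e ∈ (MISGraph G ℓ C).edgeSet) :
    ∃ a : V, Sum.inl a ∈ e := by
  induction e using Sym2.ind with
  | _ x y =>
    rw [SimpleGraph.mem_edgeSet] at he
    match x, y with
    | inl a, _ => exact ⟨a, Sym2.mem_mk_left _ _⟩
    | inr i, inl a => exact ⟨a, Sym2.mem_mk_right _ _⟩
    | inr i, inr j => exact absurd he not_adj_inr_inr

end Aux

/-- If `V(G)` is partitioned into `ℓ` cliques `C i` and `G'` adds a vertex `v i`
with `N(v i) = C i`, then `G` has an independent set of size `ℓ` iff `G'` has an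
induced matching of size `ℓ`; moreover `IS(G') = ℓ`. -/
theorem stmt_18 {V : Type*} [Fintype V] (G : SimpleGraph V) (ℓ : ℕ)
    (C : Fin ℓ → Finset V)
    (hclique : ∀ i : Fin ℓ, G.IsClique (C i : Set V))
    (hpart : ∀ v : V, ∃! i : Fin ℓ, v ∈ C i) :
    ((∃ S : Finset V, IsIndepFinset G S ∧ S.card = ℓ) ↔
      (∃ M : Finset (Sym2 (V ⊕ Fin ℓ)), IsInducedMatchingSet (MISGraph G ℓ C) M ∧
        M.card = ℓ)) ∧
    ISn (MISGraph G ℓ C) = ℓ := by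
  classical
  open Sum in
  have hmemidx : ∀ v : V, v ∈ C (hpart v).choose := fun v => (hpart v).choose_spec.1
  have huniq : ∀ v : V, ∀ j, v ∈ C j → j = (hpart v).choose :=
    fun v => (hpart v).choose_spec.2
  set idx : V → Fin ℓ := fun v => (hpart v).choose with hidxdef
  have upper : ∀ S : Finset (V ⊕ Fin ℓ), IsIndepFinset (MISGraph G ℓ C) S → S.card ≤ ℓ := by
    intro S hS
    have h1 : S.card ≤ (Finset.univ : Finset (Fin ℓ)).card := by
      apply Finset.card_le_card_of_injOn (Sum.elim idx id)
      · intro a _; exact Finset.mem_univ _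
      · intro a ha b hb hab
        match a, b with
        | inl x, inl y =>
          simp only [Sum.elim_inl] at hab
          by_contra hne
          have hxy : x ≠ y := fun h => hne (by rw [h])
          have hadj : G.Adj x y :=
            hclique (idx x) (hmemidx x) (by rw [hab]; exact hmemidx y) hxy
          exact hS _ ha _ hb (adj_inl_inl.mpr hadj)
        | inl x, inr j =>
          simp only [Sum.elim_inl, Sum.elim_inr, id] at hab
          have hx : x ∈ C j := by rw [← hab]; exact hmemidx x
          exact absurd (adj_inl_inr.mpr hx) (hS _ ha _ hb)
        | inr i, inl y =>
          simp only [Sum.elim_inl, Sum.elim_inr, id] at hab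
          have hy : y ∈ C i := by rw [hab]; exact hmemidx y
          exact absurd (adj_inl_inr.mpr hy) (hS _ hb _ ha)
        | inr i, inr j =>
          simp only [Sum.elim_inr, id] at hab
          rw [hab]
    simpa using h1
  constructor
  · constructor
    · -- forward direction
      rintro ⟨S, hS, hcard⟩
      have hinj : Set.InjOn idx S := by
        intro a ha b hb hab
        by_contra hne
        exact hS a ha b hb (hclique (idx a) (hmemidx a) (by rw [hab]; exact hmemidx b) hne)
      have himg : S.image idx = Finset.univ := by
        apply Finset.eq_univ_of_card
        rw [Finset.card_image_of_injOn hinj, hcard]; simp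
      have hsurj : ∀ i : Fin ℓ, ∃ s, s ∈ S ∧ idx s = i := by
        intro i
        have hi : i ∈ S.image idx := by rw [himg]; exact Finset.mem_univ i
        simpa [Finset.mem_image] using hi
      choose g hgS hgidx using hsurj
      have hginj : Function.Injective g := by
        intro i j h
        rw [← hgidx i, ← hgidx j, h]
      have funinj : Function.Injective
          (fun i : Fin ℓ => s(Sum.inl (g i), (Sum.inr i : V ⊕ Fin ℓ))) := by
        intro i j h
        simp only [Sym2.eq_iff] at h
        rcases h with ⟨-, h2⟩ | ⟨h1, -⟩
        · exact Sum.inr_injective h2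
        · exact absurd h1 (by simp)
      have hgC : ∀ i : Fin ℓ, g i ∈ C i := by
        intro i
        have := hmemidx (g i)
        rwa [show (hpart (g i)).choose = idx (g i) from rfl, hgidx i] at this
      refine ⟨Finset.image (fun i : Fin ℓ => s(Sum.inl (g i), (Sum.inr i : V ⊕ Fin ℓ)))
        Finset.univ, ⟨⟨?_, ?_⟩, ?_⟩, ?_⟩
      · -- edges
        intro e he
        simp only [Finset.mem_image, Finset.mem_univ, true_and] at he
        obtain ⟨i, rfl⟩ := he
        rw [SimpleGraph.mem_edgeSet]
        exact adj_inl_inr.mpr (hgC i)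
      · -- pairwise disjoint
        intro e he f hf hef v hv hvf
        simp only [Finset.mem_image, Finset.mem_univ, true_and] at he hf
        obtain ⟨i, rfl⟩ := he
        obtain ⟨j, rfl⟩ := hf
        have hij : i ≠ j := fun h => hef (by rw [h])
        rw [Sym2.mem_iff] at hv hvf
        rcases hv with rfl | rfl <;> rcases hvf with h | h
        · exact hij (hginj (Sum.inl_injective h))
        · exact absurd h (by simp)
        · exact absurd h (by simp)
        · exact hij (Sum.inr_injective h)
      · -- induced
        intro e he f hf hef a ha b hb hadj
        simp only [Finset.mem_image, Finset.mem_univ, true_and] at he hf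
        obtain ⟨i, rfl⟩ := he
        obtain ⟨j, rfl⟩ := hf
        have hij : i ≠ j := fun h => hef (by rw [h])
        rw [Sym2.mem_iff] at ha hb
        rcases ha with rfl | rfl <;> rcases hb with rfl | rfl
        · exact hS _ (hgS i) _ (hgS j) (adj_inl_inl.mp hadj)
        · have : g i ∈ C j := adj_inl_inr.mp hadj
          have := huniq (g i) j this
          rw [show (hpart (g i)).choose = idx (g i) from rfl, hgidx i] at this
          exact hij this.symm
        · have : g j ∈ C i := adj_inl_inr.mp hadj.symm
          have := huniq (g j) i this
          rw [show (hpart (g j)).choose = idx (g j) from rfl, hgidx j] at this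
          exact hij this
        · exact not_adj_inr_inr hadj
      · rw [Finset.card_image_of_injective _ funinj, Finset.card_univ, Fintype.card_fin]
    · -- backward direction
      rintro ⟨M, ⟨⟨hedge, hdisj⟩, hind⟩, hcard⟩
      have hpick : ∀ e : {e // e ∈ M}, ∃ a : V, Sum.inl a ∈ e.1 :=
        fun e => exists_inl_mem (hedge e.1 e.2)
      choose pick hpickmem using hpick
      have hpinj : Function.Injective pick := by
        intro e f h
        by_contra hef
        have h1 : e.1 ≠ f.1 := fun hh => hef (Subtype.ext hh)
        exact hdisj e.1 e.2 f.1 f.2 h1 (Sum.inl (pick e)) (hpickmem e)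
          (by rw [h]; exact hpickmem f)
      refine ⟨M.attach.image pick, ?_, ?_⟩
      · intro a ha b hb hadj
        simp only [Finset.mem_image, Finset.mem_attach, true_and] at ha hb
        obtain ⟨e, rfl⟩ := ha
        obtain ⟨f, rfl⟩ := hb
        by_cases hef : e = f
        · subst hef
          exact G.irrefl hadj
        · have h1 : e.1 ≠ f.1 := fun hh => hef (Subtype.ext hh)
          exact hind e.1 e.2 f.1 f.2 h1 _ (hpickmem e) _ (hpickmem f)
            (adj_inl_inl.mpr hadj)
      · rw [Finset.card_image_of_injective _ hpinj, Finset.card_attach, hcard]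
  · -- ISn = ℓ
    have hmem : ℓ ∈ {n | ∃ S : Finset (V ⊕ Fin ℓ),
        IsIndepFinset (MISGraph G ℓ C) S ∧ S.card = n} := by
      refine ⟨Finset.univ.image (fun i : Fin ℓ => (Sum.inr i : V ⊕ Fin ℓ)), ?_, ?_⟩
      · intro a ha b hb
        simp only [Finset.mem_image, Finset.mem_univ, true_and] at ha hb
        obtain ⟨i, rfl⟩ := ha
        obtain ⟨j, rfl⟩ := hb
        exact not_adj_inr_inr
      · rw [Finset.card_image_of_injective _ Sum.inr_injective, Finset.card_univ,
          Fintype.card_fin]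
    have hub : ∀ n ∈ {n | ∃ S : Finset (V ⊕ Fin ℓ),
        IsIndepFinset (MISGraph G ℓ C) S ∧ S.card = n}, n ≤ ℓ := by
      rintro n ⟨S, hS, rfl⟩
      exact upper S hS
    exact le_antisymm (csSup_le ⟨ℓ, hmem⟩ hub) (le_csSup ⟨ℓ, hub⟩ hmem)
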